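/- Let q_o > q_s > 0, γ_o > 0, γ_s > 0, η = γ_o + γ_s, and suppose condition C1 holds: η q_s/(2 q_o) < γ_o < η/2. Then the total equilibrium market share with both services exceeds the on-demand-only market share: γ_s (2 γ_o q_o − η q_s)/(4 γ_o γ_s q_o − η² q_s) + γ_o (γ_s − γ_o) q_o/(4 γ_o γ_s q_o − η² q_s) > 1/2. -/

import Mathlib

/-- Under C1, the total equilibrium market share with both
services exceeds the on-demand-only market share:
`γ_s (2 γ_o q_o − η q_s)/(4 γ_o γ_s q_o − η² q_s) + γ_o (γ_s − γ_o) q_o/(4 γ_o γ_s q_o − η² q_s) > 1/2`. -/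
theorem total_market_share_grows
    (qo qs γo γs η : ℝ)
    (hq : qo > qs) (hqs : qs > 0)
    (hγo : 0 < γo) (hγs : 0 < γs)
    (hη : η = γo + γs)
    (hC1l : η * qs / (2 * qo) < γo) (hC1r : γo < η / 2) :
    γs * (2 * γo * qo - η * qs) / (4 * γo * γs * qo - η ^ 2 * qs) +
        γo * (γs - γo) * qo / (4 * γo * γs * qo - η ^ 2 * qs) > 1 / 2 := by
  have hqo : (0:ℝ) < qo := lt_trans hqs hq
  have h1 : η * qs < 2 * qo * γo := by
    rw [div_lt_iff₀ (by positivity)] at hC1l; linarith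
  have h2 : γo < γs := by rw [hη] at hC1r; linarith
  have hη0 : 0 < η := by rw [hη]; linarith
  have hD : 0 < 4 * γo * γs * qo - η ^ 2 * qs := by
    nlinarith [mul_lt_mul_of_pos_left h1 hη0, mul_pos hγo hqo, mul_lt_mul_of_pos_right h2 (mul_pos hγo hqo)]
  rw [← add_div, gt_iff_lt, div_lt_div_iff₀ (by norm_num) hD]
  have key : 0 < (γs - γo) * (2 * γo * qo - η * qs) :=
    mul_pos (sub_pos.mpr h2) (by linarith)
  rw [hη] at key ⊢
  nlinarith [key]
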